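/- An unordered rooted tree τ is self-nested (all subtrees of equal height are isomorphic) if and only if for every pair of vertices v, w with height(τ[v]) ≤ height(τ[w]), τ[v] is isomorphic to a subtree of τ[w]. -/

import Mathlib

inductive UTree : Type where
  | node : List UTree → UTree

namespace UTree

def size : UTree → ℕ
  | node l => 1 + (l.attach.map fun x => size x.1).sum
decreasing_by
  have := List.sizeOf_lt_of_mem x.2
  simp only [node.sizeOf_spec]
  omega

def height : UTree → ℕ
  | node l => (l.attach.map fun x => height x.1 + 1).foldr max 0
decreasing_by
  have := List.sizeOf_lt_of_mem x.2
  simp only [node.sizeOf_spec]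
  omega

def degree : UTree → ℕ
  | node l => max l.length ((l.attach.map fun x => degree x.1).foldr max 0)
decreasing_by
  have := List.sizeOf_lt_of_mem x.2
  simp only [node.sizeOf_spec]
  omega

inductive Iso : UTree → UTree → Prop where
  | node {l₁ l₂ : List UTree} (h : l₁.length = l₂.length) (σ : Equiv.Perm (Fin l₁.length)) :
      (∀ i : Fin l₁.length, Iso (l₁.get i) (l₂.get (Fin.cast h (σ i)))) →
      Iso (node l₁) (node l₂)

inductive Ins : UTree → UTree → Prop where
  | here (l : List UTree) : Ins (node l) (node (node [] :: l))
  | there {t t' : UTree} (l₁ l₂ : List UTree) :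
      Ins t t' → Ins (node (l₁ ++ t :: l₂)) (node (l₁ ++ t' :: l₂))

inductive EIns : Option UTree → Option UTree → Prop where
  | root : EIns none (some (node []))
  | lift {t t' : UTree} : Ins t t' → EIns (some t) (some t')

def Step (a b : Option UTree) : Prop := EIns a b ∨ EIns b a

inductive Chain : ℕ → Option UTree → Option UTree → Prop where
  | refl (a : Option UTree) : Chain 0 a a
  | step {a b c : Option UTree} {n : ℕ} : Step a b → Chain n b c → Chain (n + 1) a c

def OIso : Option UTree → Option UTree → Prop
  | none, none => True
  | some a, some b => Iso a b
  | _, _ => False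

noncomputable def edist (a b : Option UTree) : ℕ :=
  sInf {n : ℕ | ∃ c, Chain n a c ∧ OIso c b}

inductive IsSubtree : UTree → UTree → Prop where
  | refl (t : UTree) : IsSubtree t t
  | child {s c : UTree} {l : List UTree} : c ∈ l → IsSubtree s c → IsSubtree s (node l)

def SelfNested (τ : UTree) : Prop :=
  ∀ s t : UTree, IsSubtree s τ → IsSubtree t τ → height s = height t → Iso s t

end UTree

namespace UTree

theorem foldr_max_le_iff {l : List ℕ} {k : ℕ} : l.foldr max 0 ≤ k ↔ ∀ x ∈ l, x ≤ k := by
  induction l with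
  | nil => simp
  | cons a l ih => simp [ih, max_le_iff]

theorem foldr_max_mem (l : List ℕ) : l.foldr max 0 = 0 ∨ l.foldr max 0 ∈ l := by
  induction l with
  | nil => simp
  | cons a l ih =>
    simp only [List.foldr_cons]
    rcases le_total a (l.foldr max 0) with h | h
    · rw [max_eq_right h]
      rcases ih with h0 | hm
      · left; exact h0
      · right; exact List.mem_cons_of_mem _ hm
    · rw [max_eq_left h]
      right; exact List.mem_cons_self

theorem height_node (l : List UTree) :
    height (node l) = (l.map fun t => height t + 1).foldr max 0 := by
  rw [height]
  congr 1
  simp [List.attach_map_val]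

theorem height_node_le {l : List UTree} {k : ℕ} :
    height (node l) ≤ k ↔ ∀ c ∈ l, height c + 1 ≤ k := by
  rw [height_node, foldr_max_le_iff]; simp

theorem mem_height_lt {c : UTree} {l : List UTree} (h : c ∈ l) :
    height c + 1 ≤ height (node l) :=
  (height_node_le.mp le_rfl) c h

theorem height_le_of_isSubtree {s t : UTree} (h : IsSubtree s t) : height s ≤ height t := by
  induction h with
  | refl => exact le_rfl
  | child hc _ ih => exact le_trans ih (le_trans (Nat.le_succ _) (mem_height_lt hc))

theorem isSubtree_trans {a b c : UTree} (h1 : IsSubtree a b) (h2 : IsSubtree b c) :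
    IsSubtree a c := by
  induction h2 with
  | refl => exact h1
  | child hm _ ih => exact .child hm ih

theorem iso_height {a b : UTree} (h : Iso a b) : height a = height b := by
  induction h with
  | @node l₁ l₂ hlen σ hiso ih =>
    apply le_antisymm
    · rw [height_node_le]
      intro c hc
      obtain ⟨i, hi⟩ := List.mem_iff_get.mp hc
      rw [← hi, ih i]
      exact mem_height_lt (List.get_mem _ _)
    · rw [height_node_le]
      intro c hc
      obtain ⟨j, hj⟩ := List.mem_iff_get.mp hc
      have h2 := ih (σ.symm (Fin.cast hlen.symm j))
      rw [Equiv.apply_symm_apply] at h2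
      have hcast : Fin.cast hlen (Fin.cast hlen.symm j) = j := rfl
      rw [hcast] at h2
      rw [← hj, ← h2]
      exact mem_height_lt (List.get_mem _ _)

theorem exists_subtree_height (t : UTree) (h : ℕ) (hh : h ≤ height t) :
    ∃ u, IsSubtree u t ∧ height u = h := by
  match t with
  | node l =>
    rcases eq_or_lt_of_le hh with heq | hlt
    · exact ⟨node l, .refl _, heq.symm⟩
    · have hne : height (node l) ≠ 0 := by omega
      have hex : ∃ c ∈ l, height c + 1 = height (node l) := by
        rcases foldr_max_mem (l.map fun t => height t + 1) with h0 | hm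
        · rw [height_node] at hne; exact absurd h0 hne
        · rw [height_node]; simpa using hm
      obtain ⟨c, hc, hch⟩ := hex
      obtain ⟨u, hu, hhu⟩ := exists_subtree_height c h (by omega)
      exact ⟨u, .child hc hu, hhu⟩
termination_by sizeOf t
decreasing_by
  have := List.sizeOf_lt_of_mem hc
  simp only [node.sizeOf_spec]
  omega

theorem eq_of_isSubtree_height {u t : UTree} (h : IsSubtree u t) (hh : height t ≤ height u) :
    u = t := by
  cases h with
  | refl => rfl
  | child hm hsub =>
    exfalso
    have h1 := height_le_of_isSubtree hsub
    have h2 := mem_height_lt hm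
    omega

end UTree

open UTree in
/-- A tree is self-nested (all subtrees of equal height are isomorphic) iff for every
pair of subtrees `s, t` with `height s ≤ height t`, `s` is isomorphic to a subtree
of `t`. -/
theorem stmt_19 (τ : UTree) :
    τ.SelfNested ↔
      ∀ s t : UTree, IsSubtree s τ → IsSubtree t τ → height s ≤ height t →
        ∃ u : UTree, IsSubtree u t ∧ Iso s u := by
  constructor
  · intro hsn s t hs ht hle
    obtain ⟨u, hu, hhu⟩ := exists_subtree_height t (height s) hle
    exact ⟨u, hu, hsn s u hs (isSubtree_trans hu ht) hhu.symm⟩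
  · intro H s t hs ht hheq
    obtain ⟨u, hu, hiso⟩ := H s t hs ht hheq.le
    have h1 : height u = height s := (iso_height hiso).symm
    have h2 := eq_of_isSubtree_height hu (by rw [h1, hheq])
    rwa [h2] at hiso
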